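/- Fix positive reals P and an integer K ≥ 2. Let h be a random vector in ℂ^{N_t} with E[‖h‖²] < ∞ and h ≠ 0 almost surely, and for j = 1, …, K−1 let w_j and ṽ be random vectors in ℂ^{N_t} such that, almost surely, ‖w_j‖ = 1, ‖ṽ‖ = 1, and ⟨w_j, ṽ⟩ = 0 for every j. Then E[log₂(1 + (P/K)·∑_{j=1}^{K−1} |⟨h, w_j⟩|²)] ≤ log₂(1 + P·((K−1)/K)·D), where D = E[‖h‖²·(1 − |⟨h/‖h‖, ṽ⟩|²)]. -/

import Mathlib

open MeasureTheory ProbabilityTheory Real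
open scoped ComplexInnerProductSpace

lemma aux_norm_inner_smul {Nt : ℕ} (x z : EuclideanSpace ℂ (Fin Nt)) :
    ‖(⟪((‖x‖ : ℂ)⁻¹ • x), z⟫ : ℂ)‖ = ‖x‖⁻¹ * ‖(⟪x, z⟫ : ℂ)‖ := by
  rw [inner_smul_left]
  simp [norm_mul, norm_inv]

lemma aux_le_one {Nt : ℕ} (x z : EuclideanSpace ℂ (Fin Nt)) (hz : ‖z‖ = 1) :
    ‖(⟪((‖x‖ : ℂ)⁻¹ • x), z⟫ : ℂ)‖ ≤ 1 := by
  rcases eq_or_ne x 0 with rfl | hx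
  · simp
  · have hx0 : (0:ℝ) < ‖x‖ := norm_pos_iff.2 hx
    rw [aux_norm_inner_smul]
    calc ‖x‖⁻¹ * ‖(⟪x, z⟫ : ℂ)‖ ≤ ‖x‖⁻¹ * (‖x‖ * ‖z‖) := by
          gcongr; exact norm_inner_le_norm x z
      _ = 1 := by rw [hz]; field_simp

lemma aux_bessel {Nt : ℕ} (x y z : EuclideanSpace ℂ (Fin Nt))
    (hx : x ≠ 0) (hy : ‖y‖ = 1) (hz : ‖z‖ = 1) (hyz : ⟪y, z⟫ = (0:ℂ)) :
    ‖(⟪x, y⟫ : ℂ)‖ ^ 2 ≤ ‖x‖ ^ 2 * (1 - ‖(⟪((‖x‖ : ℂ)⁻¹ • x), z⟫ : ℂ)‖ ^ 2) := by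
  have hx0 : (0:ℝ) < ‖x‖ := norm_pos_iff.2 hx
  have hON : Orthonormal ℂ (![y, z]) := by
    constructor
    · intro i; fin_cases i <;> simp [hy, hz]
    · intro i j hij
      have hzy : ⟪z, y⟫ = (0:ℂ) := inner_eq_zero_symm.mp hyz
      fin_cases i <;> fin_cases j <;>
        simp only [Matrix.cons_val_zero, Matrix.cons_val_one, Matrix.head_cons] <;>
        first
          | exact absurd rfl hij
          | exact hyz
          | exact hzy
  have hb := hON.sum_inner_products_le (s := Finset.univ) x
  rw [Fin.sum_univ_two] at hb
  simp only [Matrix.cons_val_zero, Matrix.cons_val_one, Matrix.head_cons] at hb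
  rw [norm_inner_symm y x, norm_inner_symm z x] at hb
  rw [aux_norm_inner_smul]
  have : ‖x‖ ^ 2 * (1 - (‖x‖⁻¹ * ‖(⟪x, z⟫ : ℂ)‖) ^ 2) = ‖x‖ ^ 2 - ‖(⟪x, z⟫ : ℂ)‖ ^ 2 := by
    field_simp
  rw [this]
  linarith

open MeasureTheory ProbabilityTheory Real
open scoped ComplexInnerProductSpace

/-- Proposition 3.2: with `K ≥ 2` users and power `P > 0`, if the unit-norm beamforming
vectors `w j` of the other `K − 1` users are almost surely orthogonal to the unit-norm
quantized direction `v`, then the expected interference rate is bounded as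
`E[log₂(1 + (P/K)·∑ⱼ |⟨h, wⱼ⟩|²)] ≤ log₂(1 + P·((K−1)/K)·D)`,
where `D = E[‖h‖²·(1 − |⟨h/‖h‖, v⟩|²)]` is the quantization distortion. -/
theorem stmt_4 {Ω : Type*} [MeasureSpace Ω] [IsProbabilityMeasure (ℙ : Measure Ω)]
    (P : ℝ) (hP : 0 < P) (K : ℕ) (hK : 2 ≤ K) (Nt : ℕ)
    (h : Ω → EuclideanSpace ℂ (Fin Nt))
    (w : Fin (K - 1) → Ω → EuclideanSpace ℂ (Fin Nt))
    (v : Ω → EuclideanSpace ℂ (Fin Nt))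
    (hmeas : AEStronglyMeasurable h ℙ) (hwmeas : ∀ j, AEStronglyMeasurable (w j) ℙ)
    (hvmeas : AEStronglyMeasurable v ℙ)
    (hint : Integrable (fun ω => ‖h ω‖ ^ 2) ℙ)
    (hne : ∀ᵐ ω ∂ℙ, h ω ≠ 0)
    (hw1 : ∀ j, ∀ᵐ ω ∂ℙ, ‖w j ω‖ = 1)
    (hv1 : ∀ᵐ ω ∂ℙ, ‖v ω‖ = 1)
    (horth : ∀ j, ∀ᵐ ω ∂ℙ, ⟪w j ω, v ω⟫ = (0 : ℂ))
    (D : ℝ)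
    (hD : D = ∫ ω, ‖h ω‖ ^ 2 * (1 - ‖(⟪((‖h ω‖ : ℂ)⁻¹ • h ω), v ω⟫ : ℂ)‖ ^ 2) ∂ℙ) :
    ∫ ω, Real.logb 2 (1 + (P / K) * ∑ j : Fin (K - 1), ‖(⟪h ω, w j ω⟫ : ℂ)‖ ^ 2) ∂ℙ ≤
      Real.logb 2 (1 + P * ((K - 1 : ℝ) / K) * D) := by
  have hK2 : (2:ℝ) ≤ (K:ℝ) := by exact_mod_cast hK
  have hKpos : (0:ℝ) < (K:ℝ) := by linarith
  set c : ℝ := P * ((K - 1 : ℝ) / K) with hc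
  have hc0 : 0 < c := by
    apply mul_pos hP; apply div_pos <;> linarith
  set g : Ω → ℝ := fun ω => ‖h ω‖ ^ 2 * (1 - ‖(⟪((‖h ω‖ : ℂ)⁻¹ • h ω), v ω⟫ : ℂ)‖ ^ 2) with hgdef
  set F : Ω → ℝ := fun ω => (P / K) * ∑ j : Fin (K - 1), ‖(⟪h ω, w j ω⟫ : ℂ)‖ ^ 2 with hFdef
  -- measurability
  have hbar : AEStronglyMeasurable (fun ω => ((‖h ω‖ : ℂ))⁻¹ • h ω) ℙ := by
    refine AEStronglyMeasurable.fun_smul ?_ hmeas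
    exact ((Complex.measurable_ofReal.comp_aemeasurable
      hmeas.norm.aemeasurable).inv).aestronglyMeasurable
  have hgm : AEStronglyMeasurable g ℙ := by
    have t1 : AEStronglyMeasurable (fun ω => ‖(⟪((‖h ω‖ : ℂ)⁻¹ • h ω), v ω⟫ : ℂ)‖) ℙ :=
      (hbar.inner hvmeas).norm
    have t2 : AEStronglyMeasurable (fun ω => ‖(⟪((‖h ω‖ : ℂ)⁻¹ • h ω), v ω⟫ : ℂ)‖ ^ 2) ℙ := by
      simpa [pow_two] using t1.fun_mul t1
    exact hint.aestronglyMeasurable.mul (aestronglyMeasurable_const.sub t2)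
  have hFm : AEStronglyMeasurable F ℙ := by
    refine aestronglyMeasurable_const.mul ?_
    refine Finset.aestronglyMeasurable_fun_sum _ fun j _ => ?_
    have t1 : AEStronglyMeasurable (fun ω => (⟪h ω, w j ω⟫ : ℂ)) ℙ := hmeas.inner (hwmeas j)
    simpa [pow_two] using t1.norm.fun_mul t1.norm
  -- pointwise a.e. facts
  have hle1 : ∀ᵐ ω ∂ℙ, ‖(⟪((‖h ω‖ : ℂ)⁻¹ • h ω), v ω⟫ : ℂ)‖ ≤ 1 :=
    hv1.mono fun ω hv => aux_le_one (h ω) (v ω) hv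
  have hg0 : ∀ᵐ ω ∂ℙ, 0 ≤ g ω := hle1.mono fun ω hle => by
    have : ‖(⟪((‖h ω‖ : ℂ)⁻¹ • h ω), v ω⟫ : ℂ)‖ ^ 2 ≤ 1 := by nlinarith [norm_nonneg (⟪((‖h ω‖ : ℂ)⁻¹ • h ω), v ω⟫ : ℂ)]
    simp only [hgdef]
    nlinarith [sq_nonneg ‖h ω‖]
  have hgle : ∀ᵐ ω ∂ℙ, g ω ≤ ‖h ω‖ ^ 2 := hle1.mono fun ω hle => by
    simp only [hgdef]
    nlinarith [sq_nonneg ‖h ω‖, norm_nonneg (⟪((‖h ω‖ : ℂ)⁻¹ • h ω), v ω⟫ : ℂ)]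
  have hFg : ∀ᵐ ω ∂ℙ, F ω ≤ c * g ω := by
    have hall : ∀ᵐ ω ∂ℙ, (∀ j, ‖w j ω‖ = 1) ∧ (∀ j, ⟪w j ω, v ω⟫ = (0:ℂ)) ∧
        h ω ≠ 0 ∧ ‖v ω‖ = 1 := by
      refine ((ae_all_iff.2 hw1).and ((ae_all_iff.2 horth).and (hne.and hv1)))
    filter_upwards [hall, hg0] with ω ⟨hw, hor, hx, hv⟩ hg0ω
    have hterm : ∀ j, ‖(⟪h ω, w j ω⟫ : ℂ)‖ ^ 2 ≤ g ω := fun j =>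
      aux_bessel (h ω) (w j ω) (v ω) hx (hw j) hv (hor j)
    have hsum : ∑ j : Fin (K - 1), ‖(⟪h ω, w j ω⟫ : ℂ)‖ ^ 2 ≤ ((K:ℝ) - 1) * g ω := by
      calc ∑ j : Fin (K - 1), ‖(⟪h ω, w j ω⟫ : ℂ)‖ ^ 2
          ≤ ∑ _j : Fin (K - 1), g ω := Finset.sum_le_sum fun j _ => hterm j
        _ = ((K - 1 : ℕ) : ℝ) * g ω := by simp [mul_comm]
        _ = ((K:ℝ) - 1) * g ω := by
            congr 1
            push_cast [Nat.cast_sub (by omega : 1 ≤ K)]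
            ring
    calc F ω ≤ (P / K) * (((K:ℝ) - 1) * g ω) := by
          simp only [hFdef]
          apply mul_le_mul_of_nonneg_left hsum (by positivity)
      _ = c * g ω := by simp only [hc]; ring
  -- integrability
  have hgint : Integrable g ℙ := by
    refine hint.mono' hgm ?_
    filter_upwards [hg0, hgle] with ω h1 h2
    rw [Real.norm_of_nonneg h1]; exact h2
  have hintD : D = ∫ ω, g ω ∂ℙ := hD
  have hDnn : 0 ≤ ∫ ω, g ω ∂ℙ := integral_nonneg_of_ae hg0
  -- concavity and Jensen for log (1 + c x) on Ici 0
  have hconc : ConcaveOn ℝ (Set.Ici (0:ℝ)) (fun x => Real.log (1 + c * x)) := by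
    refine ⟨convex_Ici 0, fun x hx y hy a b ha hb hab => ?_⟩
    have hx1 : (0:ℝ) < 1 + c * x := by have := hx.out; nlinarith
    have hy1 : (0:ℝ) < 1 + c * y := by have := hy.out; nlinarith
    have hjl := strictConcaveOn_log_Ioi.concaveOn.2 (Set.mem_Ioi.2 hx1)
      (Set.mem_Ioi.2 hy1) ha hb hab
    simp only [smul_eq_mul] at hjl ⊢
    calc a * Real.log (1 + c * x) + b * Real.log (1 + c * y)
        ≤ Real.log (a * (1 + c * x) + b * (1 + c * y)) := hjl
      _ = Real.log (1 + c * (a * x + b * y)) := by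
          congr 1; linear_combination hab
  have hcont : ContinuousOn (fun x => Real.log (1 + c * x)) (Set.Ici (0:ℝ)) := by
    intro x hx
    have hx1 : (0:ℝ) < 1 + c * x := by have := hx.out; nlinarith
    exact (ContinuousAt.comp (f := fun x : ℝ => 1 + c * x)
      (Real.continuousAt_log hx1.ne') (by fun_prop)).continuousWithinAt
  have hGm : AEStronglyMeasurable (fun ω => Real.log (1 + c * g ω)) ℙ :=
    (Real.measurable_log.comp_aemeasurable
      (aemeasurable_const.add (aemeasurable_const.mul hgm.aemeasurable))).aestronglyMeasurable
  have hlogbound : ∀ᵐ ω ∂ℙ, ‖Real.log (1 + c * g ω)‖ ≤ c * ‖h ω‖ ^ 2 := by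
    filter_upwards [hg0, hgle] with ω h1 h2
    have h3 : (0:ℝ) < 1 + c * g ω := by nlinarith
    rw [Real.norm_of_nonneg (Real.log_nonneg (by nlinarith))]
    have := Real.log_le_sub_one_of_pos h3
    nlinarith
  have hGint : Integrable (fun ω => Real.log (1 + c * g ω)) ℙ :=
    (hint.const_mul c).mono' hGm hlogbound
  have hjensen : (∫ ω, Real.log (1 + c * g ω) ∂ℙ) ≤ Real.log (1 + c * ∫ ω, g ω ∂ℙ) := by
    have := hconc.le_map_integral hcont isClosed_Ici
      (hg0.mono fun ω hω => Set.mem_Ici.2 hω) hgint (by exact hGint)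
    exact this
  -- integrability of logb terms
  have hgoal_m : AEStronglyMeasurable (fun ω => Real.logb 2 (1 + F ω)) ℙ := by
    simp only [Real.logb, div_eq_mul_inv]
    exact ((Real.measurable_log.comp_aemeasurable
      (aemeasurable_const.add hFm.aemeasurable)).aestronglyMeasurable).mul_const _
  have hF0 : ∀ ω, 0 ≤ F ω := fun ω => by
    simp only [hFdef]
    positivity
  have hFbound : ∀ᵐ ω ∂ℙ, ‖Real.logb 2 (1 + F ω)‖ ≤ (c / Real.log 2) * ‖h ω‖ ^ 2 := by
    filter_upwards [hFg, hg0, hgle] with ω h1 h2 h3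
    have h4 : (0:ℝ) < 1 + F ω := by linarith [hF0 ω]
    rw [Real.norm_of_nonneg (Real.logb_nonneg one_lt_two (by linarith [hF0 ω]))]
    have h5 : Real.log (1 + F ω) ≤ c * ‖h ω‖ ^ 2 := by
      have := Real.log_le_sub_one_of_pos h4
      nlinarith
    rw [Real.logb, div_le_iff₀ (Real.log_pos one_lt_two)]
    calc Real.log (1 + F ω) ≤ c * ‖h ω‖ ^ 2 := h5
      _ = c / Real.log 2 * ‖h ω‖ ^ 2 * Real.log 2 := by
          field_simp
  have hFint : Integrable (fun ω => Real.logb 2 (1 + F ω)) ℙ :=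
    ((hint.const_mul (c / Real.log 2)).mono' hgoal_m hFbound)
  have hGbint : Integrable (fun ω => Real.logb 2 (1 + c * g ω)) ℙ := by
    simp only [Real.logb]
    exact hGint.div_const _
  -- chain
  have step1 : ∫ ω, Real.logb 2 (1 + F ω) ∂ℙ ≤ ∫ ω, Real.logb 2 (1 + c * g ω) ∂ℙ := by
    refine integral_mono_ae hFint hGbint ?_
    filter_upwards [hFg] with ω h1
    exact Real.logb_le_logb_of_le one_lt_two (by linarith [hF0 ω]) (by linarith)
  have step2 : ∫ ω, Real.logb 2 (1 + c * g ω) ∂ℙ ≤ Real.logb 2 (1 + c * ∫ ω, g ω ∂ℙ) := by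
    simp only [Real.logb]
    rw [integral_div]
    gcongr
  calc ∫ ω, Real.logb 2 (1 + F ω) ∂ℙ ≤ Real.logb 2 (1 + c * ∫ ω, g ω ∂ℙ) :=
        step1.trans step2
    _ = Real.logb 2 (1 + c * D) := by rw [hintD]
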